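/- Let G = G₁ *_H G₂ and S = (G₁)^G ∪ (G₂)^G the set of all conjugates of elements of the factors. Then for every s ∈ S, f(s) ≤ 3, where f is the segment-counting quasi-homomorphism. -/

import Mathlib

open scoped Pointwise
set_option linter.unusedSectionVars false

/-- `x` and `y` lie in different factors. -/
def InDiffFactors {G : Type*} [Group G] (G₁ G₂ : Subgroup G) (x y : G) : Prop :=
  ¬(x ∈ G₁ ∧ y ∈ G₁) ∧ ¬(x ∈ G₂ ∧ y ∈ G₂)

/-- A reduced word in an (internal) amalgamated free product of `G₁` and `G₂` over `H`. -/
def ReducedWord' {G : Type*} [Group G] (G₁ G₂ H : Subgroup G) (w : List G) : Prop :=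
  (∀ x ∈ w, x ∈ (G₁ : Set G) ∪ (G₂ : Set G)) ∧
  w.Chain' (InDiffFactors G₁ G₂) ∧
  (1 < w.length → ∀ x ∈ w, x ∉ H) ∧
  (w.length = 1 → (1 : G) ∉ w)

/-- `G` is the (internal) amalgamated free product `G₁ *_H G₂`: `H = G₁ ⊓ G₂`,
the factors generate, and nonempty reduced words have nontrivial product. -/
def IsAmalgam {G : Type*} [Group G] (G₁ G₂ H : Subgroup G) : Prop :=
  H = G₁ ⊓ G₂ ∧ Subgroup.closure ((G₁ : Set G) ∪ (G₂ : Set G)) = ⊤ ∧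
  ∀ w : List G, ReducedWord' G₁ G₂ H w → w ≠ [] → w.prod ≠ 1

section Basic

variable {G : Type*} [Group G] {G₁ G₂ H : Subgroup G}

/-- `x` and `y` lie in a common factor. -/
def SameF (G₁ G₂ : Subgroup G) (x y : G) : Prop :=
  (x ∈ G₁ ∧ y ∈ G₁) ∨ (x ∈ G₂ ∧ y ∈ G₂)

lemma idf_iff {x y : G} : InDiffFactors G₁ G₂ x y ↔ ¬ SameF G₁ G₂ x y := by
  unfold InDiffFactors SameF; tauto

lemma idf_symm {x y : G} (h : InDiffFactors G₁ G₂ x y) : InDiffFactors G₁ G₂ y x := by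
  unfold InDiffFactors at *; tauto

lemma sameF_symm {x y : G} (h : SameF G₁ G₂ x y) : SameF G₁ G₂ y x := by
  unfold SameF at *; tauto

lemma sameF_inv_left {x y : G} (h : SameF G₁ G₂ x y) : SameF G₁ G₂ x⁻¹ y := by
  rcases h with ⟨h1, h2⟩ | ⟨h1, h2⟩
  · exact Or.inl ⟨inv_mem h1, h2⟩
  · exact Or.inr ⟨inv_mem h1, h2⟩

lemma sameF_inv_iff {x y : G} : SameF G₁ G₂ x⁻¹ y ↔ SameF G₁ G₂ x y := by
  constructor
  · intro h; simpa using sameF_inv_left h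
  · exact sameF_inv_left

variable (ham : IsAmalgam G₁ G₂ H)
include ham

lemma mem_H_of_both {x : G} (h1 : x ∈ G₁) (h2 : x ∈ G₂) : x ∈ H := by
  rw [ham.1]; exact ⟨h1, h2⟩

lemma H_le_left : (H : Set G) ⊆ (G₁ : Set G) := by
  intro x hx; rw [ham.1] at hx; exact hx.1

lemma H_le_right : (H : Set G) ⊆ (G₂ : Set G) := by
  intro x hx; rw [ham.1] at hx; exact hx.2

lemma sameF_of_mem_H_left {x y : G} (hx : x ∈ H)
    (hy : y ∈ (G₁ : Set G) ∪ (G₂ : Set G)) : SameF G₁ G₂ x y := by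
  rcases hy with hy | hy
  · exact Or.inl ⟨H_le_left ham hx, hy⟩
  · exact Or.inr ⟨H_le_right ham hx, hy⟩

lemma mul_mem_union_of_sameF {x y : G} (h : SameF G₁ G₂ x y) :
    x * y ∈ (G₁ : Set G) ∪ (G₂ : Set G) := by
  rcases h with ⟨h1, h2⟩ | ⟨h1, h2⟩
  · exact Or.inl (mul_mem h1 h2)
  · exact Or.inr (mul_mem h1 h2)

lemma sameF_mul_right {x y : G} (h : SameF G₁ G₂ x y) : SameF G₁ G₂ x (x * y) := by
  rcases h with ⟨h1, h2⟩ | ⟨h1, h2⟩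
  · exact Or.inl ⟨h1, mul_mem h1 h2⟩
  · exact Or.inr ⟨h1, mul_mem h1 h2⟩

/-- Key transfer lemma: if `e ∉ H` lies in a common factor with `u₁`, and `u₂` is in a
different factor from `u₁`, then `u₂` is in a different factor from `e`. -/
lemma idf_of_sameF {u₁ u₂ e : G} (he : e ∉ H) (hs : SameF G₁ G₂ u₁ e)
    (hidf : InDiffFactors G₁ G₂ u₂ u₁) : InDiffFactors G₁ G₂ u₂ e := by
  constructor
  · rintro ⟨h2, h1⟩
    rcases hs with ⟨ha, hb⟩ | ⟨ha, hb⟩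
    · exact hidf.1 ⟨h2, ha⟩
    · exact he (mem_H_of_both ham h1 hb)
  · rintro ⟨h2, h1⟩
    rcases hs with ⟨ha, hb⟩ | ⟨ha, hb⟩
    · exact he (mem_H_of_both ham hb h1)
    · exact hidf.2 ⟨h2, ha⟩

lemma notin_H_of_not_sameF {x y : G} (hx : x ∈ (G₁ : Set G) ∪ (G₂ : Set G))
    (hy : y ∈ (G₁ : Set G) ∪ (G₂ : Set G)) (h : ¬ SameF G₁ G₂ x y) : x ∉ H ∧ y ∉ H := by
  constructor
  · intro hxH; exact h (sameF_of_mem_H_left ham hxH hy)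
  · intro hyH; exact h (sameF_symm (sameF_of_mem_H_left ham hyH hx))

end Basic

section Reduced

variable {G : Type*} [Group G] {G₁ G₂ H : Subgroup G}

lemma reduced_of_strong {w : List G}
    (h1 : ∀ x ∈ w, x ∈ (G₁ : Set G) ∪ (G₂ : Set G))
    (h2 : w.Chain' (InDiffFactors G₁ G₂))
    (h3 : ∀ x ∈ w, x ∉ H) : ReducedWord' G₁ G₂ H w :=
  ⟨h1, h2, fun _ => h3, fun _ h1w => absurd (one_mem H) (h3 1 h1w)⟩

lemma reduced_tail {z : G} {t : List G} (h : ReducedWord' G₁ G₂ H (z :: t)) :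
    ReducedWord' G₁ G₂ H t := by
  obtain ⟨hl, hc, h3, h4⟩ := h
  refine ⟨fun x hx => hl x (List.mem_cons_of_mem _ hx), (List.isChain_cons.mp hc).2, ?_, ?_⟩
  · intro hlen x hx
    exact h3 (by simp; omega) x (List.mem_cons_of_mem _ hx)
  · intro hlen h1
    exact h3 (by simp [hlen]) 1 (List.mem_cons_of_mem _ h1) (one_mem H)

end Reduced

section Words

variable {G : Type*} [Group G] {G₁ G₂ H : Subgroup G}

/-- The inverse word. -/
def invrev (w : List G) : List G := (w.map fun g => g⁻¹).reverse

lemma invrev_prod (w : List G) : (invrev w).prod = w.prod⁻¹ :=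
  (List.prod_inv_reverse w).symm

lemma invrev_length (w : List G) : (invrev w).length = w.length := by simp [invrev]

lemma invrev_mem {w : List G} {x : G} : x ∈ invrev w ↔ x⁻¹ ∈ w := by
  simp only [invrev, List.mem_reverse, List.mem_map]
  constructor
  · rintro ⟨y, hy, rfl⟩; simpa using hy
  · intro h; exact ⟨x⁻¹, h, by simp⟩

lemma idf_inv_inv {x y : G} (h : InDiffFactors G₁ G₂ x y) :
    InDiffFactors G₁ G₂ x⁻¹ y⁻¹ := by
  unfold InDiffFactors at *
  constructor
  · rintro ⟨a, b⟩; exact h.1 ⟨by simpa using inv_mem a, by simpa using inv_mem b⟩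
  · rintro ⟨a, b⟩; exact h.2 ⟨by simpa using inv_mem a, by simpa using inv_mem b⟩

lemma invrev_chain {w : List G} (h : w.Chain' (InDiffFactors G₁ G₂)) :
    (invrev w).Chain' (InDiffFactors G₁ G₂) := by
  unfold invrev
  simp only [List.Chain']
  rw [List.isChain_reverse]
  rw [List.isChain_map]
  exact List.IsChain.imp (fun a b hab => idf_symm (idf_inv_inv hab)) h

lemma invrev_reduced (ham : IsAmalgam G₁ G₂ H) {w : List G} (hw : ReducedWord' G₁ G₂ H w) :
    ReducedWord' G₁ G₂ H (invrev w) := by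
  obtain ⟨hl, hc, h3, h4⟩ := hw
  refine ⟨?_, invrev_chain hc, ?_, ?_⟩
  · intro x hx
    rcases hl x⁻¹ (invrev_mem.mp hx) with h | h
    · exact Or.inl (by simpa using inv_mem h)
    · exact Or.inr (by simpa using inv_mem h)
  · intro hlen x hx hxH
    exact h3 (by rwa [invrev_length] at hlen) x⁻¹ (invrev_mem.mp hx) (inv_mem hxH)
  · intro hlen h1
    exact h4 (by rwa [invrev_length] at hlen) (by simpa using invrev_mem.mp h1)

lemma invrev_getLast? (w : List G) : (invrev w).getLast? = w.head?.map (fun g => g⁻¹) := by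
  unfold invrev
  rw [List.getLast?_reverse]
  cases w <;> simp

lemma invrev_head? (w : List G) : (invrev w).head? = w.getLast?.map (fun g => g⁻¹) := by
  unfold invrev
  rw [List.head?_reverse]
  rw [List.getLast?_map]

end Words

section KLemma

variable {G : Type*} [Group G] {G₁ G₂ H : Subgroup G}

lemma sameF_H_mul (ham : IsAmalgam G₁ G₂ H) {h x : G} (hh : h ∈ H)
    (hx : x ∈ (G₁ : Set G) ∪ (G₂ : Set G)) : SameF G₁ G₂ x (h * x) := by
  rcases hx with hx | hx
  · exact Or.inl ⟨hx, mul_mem (H_le_left ham hh) hx⟩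
  · exact Or.inr ⟨hx, mul_mem (H_le_right ham hh) hx⟩

lemma prod_notin_union (ham : IsAmalgam G₁ G₂ H) {v : List G}
    (hv : ReducedWord' G₁ G₂ H v) (h2 : 2 ≤ v.length)
    (hc : v.prod ∈ (G₁ : Set G) ∪ (G₂ : Set G)) : False := by
  suffices h : ∀ N (v : List G), v.length ≤ N → ReducedWord' G₁ G₂ H v → 2 ≤ v.length →
      v.prod ∈ (G₁ : Set G) ∪ (G₂ : Set G) → False from
    h v.length v le_rfl hv h2 hc
  clear hv h2 hc v
  intro N
  induction N with
  | zero => intro v h; intros; omega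
  | succ N IH =>
    intro v hlen hv h2 hc
    obtain ⟨v₁, t, rfl⟩ : ∃ v₁ t, v = v₁ :: t := by
      cases v with
      | nil => simp at h2
      | cons a t => exact ⟨a, t, rfl⟩
    obtain ⟨v₂, t', rfl⟩ : ∃ v₂ t', t = v₂ :: t' := by
      cases t with
      | nil => simp at h2
      | cons a t => exact ⟨a, t, rfl⟩
    set t := v₂ :: t' with ht
    have hnotH : ∀ x ∈ v₁ :: t, x ∉ H := hv.2.2.1 (by simp [ht])
    have hlet : ∀ x ∈ v₁ :: t, x ∈ (G₁ : Set G) ∪ (G₂ : Set G) := hv.1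
    have hchain := hv.2.1
    have hidf12 : InDiffFactors G₁ G₂ v₁ v₂ := (List.isChain_cons_cons.mp hchain).1
    have hprod : (v₁ :: t).prod = v₁ * t.prod := List.prod_cons
    set c := (v₁ :: t).prod with hcdef
    have hv1 : v₁ ∈ (G₁ : Set G) ∪ (G₂ : Set G) := hlet v₁ (by simp)
    have hv1H : v₁ ∉ H := hnotH v₁ (by simp)
    by_cases hcH : c ∈ H
    · -- word (c⁻¹ * v₁) :: t is reduced with product 1
      set e := c⁻¹ * v₁ with he
      have heH : e ∉ H := by
        intro h
        exact hv1H (by simpa [he, mul_assoc] using mul_mem hcH h)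
      have hsf : SameF G₁ G₂ v₁ e := sameF_H_mul ham (inv_mem hcH) hv1
      have hred : ReducedWord' G₁ G₂ H (e :: t) := by
        apply reduced_of_strong
        · intro x hx
          rcases List.mem_cons.mp hx with rfl | hx
          · exact mul_mem_union_of_sameF ham (sameF_of_mem_H_left ham (inv_mem hcH) hv1)
          · exact hlet x (List.mem_cons_of_mem _ hx)
        · rw [List.Chain', List.isChain_cons_cons]
          exact ⟨idf_symm (idf_of_sameF ham heH hsf (idf_symm hidf12)),
            (List.isChain_cons_cons.mp hchain).2⟩
        · intro x hx
          rcases List.mem_cons.mp hx with rfl | hx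
          · exact heH
          · exact hnotH x (List.mem_cons_of_mem _ hx)
      refine ham.2.2 _ hred (by simp) ?_
      rw [List.prod_cons]
      rw [he, mul_assoc, ← hprod]
      simp
    · by_cases hsf : SameF G₁ G₂ c v₁
      · set e := v₁⁻¹ * c with he
        have htprod : t.prod = e := by rw [he, hprod]; group
        have hsfe : SameF G₁ G₂ v₁ e := by
          rcases hsf with ⟨h1, h2'⟩ | ⟨h1, h2'⟩
          · exact Or.inl ⟨h2', mul_mem (inv_mem h2') h1⟩
          · exact Or.inr ⟨h2', mul_mem (inv_mem h2') h1⟩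
        have heUn : e ∈ (G₁ : Set G) ∪ (G₂ : Set G) := by
          rcases hsfe with ⟨h1, h2'⟩ | ⟨h1, h2'⟩
          · exact Or.inl h2'
          · exact Or.inr h2'
        rcases Nat.lt_or_ge t.length 2 with hl2 | hl2
        · -- t = [v₂], so v₂ = e
          have : t' = [] := by
            have := hl2
            rw [ht] at this
            simp only [List.length_cons] at this
            exact List.length_eq_zero_iff.mp (by omega)
          subst this
          have hv2e : v₂ = e := by rw [← htprod, ht]; simp
          by_cases heH : e ∈ H
          · exact hnotH v₂ (by simp [ht]) (hv2e ▸ heH)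
          · exact (idf_iff.mp hidf12) (hv2e ▸ hsfe)
        · refine IH t ?_ (reduced_tail hv) hl2 (htprod ▸ heUn)
          have := hlen
          simp only [List.length_cons] at this
          omega
      · -- word c⁻¹ :: v₁ :: t is reduced with product 1
        have hcUn : c⁻¹ ∈ (G₁ : Set G) ∪ (G₂ : Set G) := by
          rcases hc with h | h
          · exact Or.inl (inv_mem h)
          · exact Or.inr (inv_mem h)
        have hred : ReducedWord' G₁ G₂ H (c⁻¹ :: v₁ :: t) := by
          apply reduced_of_strong
          · intro x hx
            rcases List.mem_cons.mp hx with rfl | hx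
            · exact hcUn
            · exact hlet x hx
          · rw [List.Chain', List.isChain_cons_cons]
            refine ⟨idf_iff.mpr ?_, hchain⟩
            rw [sameF_inv_iff]
            exact hsf
          · intro x hx
            rcases List.mem_cons.mp hx with rfl | hx
            · exact fun h => hcH (by simpa using inv_mem h)
            · exact hnotH x hx
        refine ham.2.2 _ hred (by simp) ?_
        rw [List.prod_cons]
        exact inv_mul_cancel _

end KLemma

section MulReduce

variable {G : Type*} [Group G] {G₁ G₂ H : Subgroup G}

lemma mul_letter (ham : IsAmalgam G₁ G₂ H) {w : List G} (hw : ReducedWord' G₁ G₂ H w)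
    {s : G} (hs : s ∈ (G₁ : Set G) ∪ (G₂ : Set G)) :
    ∃ w', ReducedWord' G₁ G₂ H w' ∧ w'.prod = s * w.prod ∧ w'.length ≤ w.length + 1 := by
  suffices h : ∀ N (w : List G), w.length ≤ N → ReducedWord' G₁ G₂ H w →
      ∀ s ∈ (G₁ : Set G) ∪ (G₂ : Set G),
      ∃ w', ReducedWord' G₁ G₂ H w' ∧ w'.prod = s * w.prod ∧ w'.length ≤ w.length + 1 from
    h w.length w le_rfl hw s hs
  clear hw hs w s
  intro N
  induction N with
  | zero =>
    intro w hlen hw s hs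
    have : w = [] := List.length_eq_zero_iff.mp (by omega)
    subst this
    by_cases h1 : s = 1
    · exact ⟨[], ⟨by simp, by simp [List.Chain'], by simp, by simp⟩, by simp [h1], by simp⟩
    · refine ⟨[s], ⟨by simpa using hs, by simp [List.Chain'], by simp, by simpa using fun h => h1 h.symm⟩,
        by simp, by simp⟩
  | succ N IH =>
    intro w hlen hw s hs
    cases w with
    | nil =>
      by_cases h1 : s = 1
      · exact ⟨[], ⟨by simp, by simp [List.Chain'], by simp, by simp⟩, by simp [h1], by simp⟩
      · refine ⟨[s], ⟨by simpa using hs, by simp [List.Chain'], by simp, by simpa using fun h => h1 h.symm⟩,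
          by simp, by simp⟩
    | cons z t =>
      have hzUn : z ∈ (G₁ : Set G) ∪ (G₂ : Set G) := hw.1 z (by simp)
      have htlet : ∀ x ∈ t, x ∈ (G₁ : Set G) ∪ (G₂ : Set G) :=
        fun x hx => hw.1 x (List.mem_cons_of_mem _ hx)
      have htnotH : t ≠ [] → ∀ x ∈ z :: t, x ∉ H := by
        intro hne
        apply hw.2.2.1
        cases t with
        | nil => exact absurd rfl hne
        | cons a b => simp
      by_cases hsz : SameF G₁ G₂ s z
      · set z' := s * z with hz'
        have hz'Un : z' ∈ (G₁ : Set G) ∪ (G₂ : Set G) := mul_mem_union_of_sameF ham hsz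
        by_cases hz'H : z' ∈ H
        · -- absorb into t by recursion
          obtain ⟨w', hred, hprod, hle⟩ := IH t (by simp at hlen; omega) (reduced_tail hw) z'
            (Or.inl (H_le_left ham hz'H))
          refine ⟨w', hred, ?_, ?_⟩
          · rw [hprod, List.prod_cons]
            rw [hz', mul_assoc]
          · simp only [List.length_cons]
            omega
        · -- replace head
          have hzz' : SameF G₁ G₂ z z' := by
            rcases hsz with ⟨h1, h2⟩ | ⟨h1, h2⟩
            · exact Or.inl ⟨h2, mul_mem h1 h2⟩
            · exact Or.inr ⟨h2, mul_mem h1 h2⟩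
          refine ⟨z' :: t, ?_, by rw [List.prod_cons, List.prod_cons, hz', mul_assoc], by simp⟩
          apply reduced_of_strong
          · intro x hx
            rcases List.mem_cons.mp hx with rfl | hx
            · exact hz'Un
            · exact htlet x hx
          · rw [List.Chain', List.isChain_cons]
            refine ⟨?_, (List.isChain_cons.mp hw.2.1).2⟩
            intro y hy
            have hidf : InDiffFactors G₁ G₂ z y := by
              cases t with
              | nil => simp at hy
              | cons a b =>
                simp at hy
                subst hy
                exact (List.isChain_cons_cons.mp hw.2.1).1
            exact idf_symm (idf_of_sameF ham hz'H hzz' (idf_symm hidf))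
          · intro x hx
            rcases List.mem_cons.mp hx with rfl | hx
            · exact hz'H
            · intro hxH
              cases t with
              | nil => simp at hx
              | cons a b =>
                exact htnotH (by simp) x (List.mem_cons_of_mem _ hx) hxH
      · -- prepend s
        have hsH : s ∉ H := fun h => hsz (sameF_of_mem_H_left ham h hzUn)
        have hzH : z ∉ H := fun h => hsz (sameF_symm (sameF_of_mem_H_left ham h hs))
        refine ⟨s :: z :: t, ?_, by simp [List.prod_cons, mul_assoc], by simp⟩
        apply reduced_of_strong
        · intro x hx
          rcases List.mem_cons.mp hx with rfl | hx
          · exact hs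
          · exact hw.1 x hx
        · rw [List.Chain', List.isChain_cons_cons]
          exact ⟨idf_iff.mpr hsz, hw.2.1⟩
        · intro x hx
          rcases List.mem_cons.mp hx with rfl | hx
          · exact hsH
          · rcases List.mem_cons.mp hx with rfl | hx
            · exact hzH
            · intro hxH
              exact htnotH (by rintro rfl; simp at hx) x (List.mem_cons_of_mem _ hx) hxH

lemma mul_word (ham : IsAmalgam G₁ G₂ H) {w : List G} (hw : ReducedWord' G₁ G₂ H w)
    {v : List G} (hv : ∀ x ∈ v, x ∈ (G₁ : Set G) ∪ (G₂ : Set G)) :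
    ∃ w', ReducedWord' G₁ G₂ H w' ∧ w'.prod = v.prod * w.prod ∧
      w'.length ≤ v.length + w.length := by
  induction v with
  | nil => exact ⟨w, hw, by simp, by simp⟩
  | cons s v' IH =>
    obtain ⟨w'', hred, hprod, hle⟩ := IH (fun x hx => hv x (List.mem_cons_of_mem _ hx))
    obtain ⟨w', hred', hprod', hle'⟩ := mul_letter ham hred (hv s (by simp))
    refine ⟨w', hred', ?_, ?_⟩
    · rw [hprod', hprod, List.prod_cons]
      group
    · simp only [List.length_cons]
      omega

lemma exists_reduced (ham : IsAmalgam G₁ G₂ H) (g : G) :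
    ∃ w, ReducedWord' G₁ G₂ H w ∧ w.prod = g := by
  have hg : g ∈ Subgroup.closure ((G₁ : Set G) ∪ (G₂ : Set G)) := by
    rw [ham.2.1]; trivial
  induction hg using Subgroup.closure_induction with
  | mem s hs =>
    obtain ⟨w', hred, hprod, _⟩ := mul_letter (w := []) ham ⟨by simp, by simp [List.Chain'], by simp, by simp⟩ hs
    exact ⟨w', hred, by simpa using hprod⟩
  | one => exact ⟨[], ⟨by simp, by simp [List.Chain'], by simp, by simp⟩, by simp⟩
  | mul x y hx hy ihx ihy =>
    obtain ⟨w₁, h₁, hp₁⟩ := ihx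
    obtain ⟨w₂, h₂, hp₂⟩ := ihy
    obtain ⟨w', hred, hprod, _⟩ := mul_word ham h₂ h₁.1
    exact ⟨w', hred, by rw [hprod, hp₁, hp₂]⟩
  | inv x hx ihx =>
    obtain ⟨w₁, h₁, hp₁⟩ := ihx
    exact ⟨invrev w₁, invrev_reduced ham h₁, by rw [invrev_prod, hp₁]⟩

end MulReduce

section Unique

variable {G : Type*} [Group G] {G₁ G₂ H : Subgroup G}

lemma invrev_notH {w : List G} (h : ∀ x ∈ w, x ∉ H) : ∀ x ∈ invrev w, x ∉ H :=
  fun x hx hc => h x⁻¹ (invrev_mem.mp hx) (inv_mem hc)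

lemma chain_replace_head (ham : IsAmalgam G₁ G₂ H) {p p' : G} {q : List G}
    (hc : (p :: q).Chain' (InDiffFactors G₁ G₂)) (hp' : p' ∉ H)
    (hs : SameF G₁ G₂ p p') : ((p' :: q)).Chain' (InDiffFactors G₁ G₂) := by
  simp only [List.Chain'] at hc ⊢
  rw [List.isChain_cons] at hc ⊢
  exact ⟨fun y hy => idf_symm (idf_of_sameF ham hp' hs (idf_symm (hc.1 y hy))), hc.2⟩

lemma reduced_append (ham : IsAmalgam G₁ G₂ H) {l₁ l₂ : List G}
    (h₁ : ∀ x ∈ l₁, x ∈ (G₁ : Set G) ∪ (G₂ : Set G))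
    (h₂ : ∀ x ∈ l₂, x ∈ (G₁ : Set G) ∪ (G₂ : Set G))
    (hc₁ : l₁.Chain' (InDiffFactors G₁ G₂)) (hc₂ : l₂.Chain' (InDiffFactors G₁ G₂))
    (hH₁ : ∀ x ∈ l₁, x ∉ H) (hH₂ : ∀ x ∈ l₂, x ∉ H)
    (hj : ∀ x ∈ l₁.getLast?, ∀ y ∈ l₂.head?, InDiffFactors G₁ G₂ x y) :
    ReducedWord' G₁ G₂ H (l₁ ++ l₂) := by
  apply reduced_of_strong
  · intro x hx
    rcases List.mem_append.mp hx with hx | hx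
    · exact h₁ x hx
    · exact h₂ x hx
  · exact List.isChain_append.mpr ⟨hc₁, hc₂, hj⟩
  · intro x hx
    rcases List.mem_append.mp hx with hx | hx
    · exact hH₁ x hx
    · exact hH₂ x hx

lemma length_unique (ham : IsAmalgam G₁ G₂ H) {u v : List G}
    (hu : ReducedWord' G₁ G₂ H u) (hv : ReducedWord' G₁ G₂ H v)
    (hp : u.prod = v.prod) : u.length = v.length := by
  suffices h : ∀ N (u v : List G), u.length + v.length ≤ N → ReducedWord' G₁ G₂ H u →
      ReducedWord' G₁ G₂ H v → u.prod = v.prod → u.length = v.length from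
    h (u.length + v.length) u v le_rfl hu hv hp
  clear hu hv hp u v
  intro N
  induction N with
  | zero =>
    intro u v hlen _ _ _
    simp only [Nat.le_zero, Nat.add_eq_zero] at hlen
    rw [hlen.1, hlen.2]
  | succ N IH =>
    intro u v hlen hu hv hp
    cases u with
    | nil =>
      cases v with
      | nil => rfl
      | cons v₁ v' => exact absurd hp.symm (ham.2.2 _ hv (by simp))
    | cons u₁ u' =>
      cases v with
      | nil => exact absurd hp (ham.2.2 _ hu (by simp))
      | cons v₁ v' =>
        cases u' with
        | nil =>
          cases v' with
          | nil => rfl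
          | cons p q =>
            exfalso
            apply prod_notin_union ham hv (by simp)
            rw [← hp]
            simpa using hu.1 u₁ (by simp)
        | cons u₂ u'' =>
          cases v' with
          | nil =>
            exfalso
            apply prod_notin_union ham hu (by simp)
            rw [hp]
            simpa using hv.1 v₁ (by simp)
          | cons p q =>
            have hunotH : ∀ x ∈ u₁ :: u₂ :: u'', x ∉ H := hu.2.2.1 (by simp)
            have hvnotH : ∀ x ∈ v₁ :: p :: q, x ∉ H := hv.2.2.1 (by simp)
            have hu1 : u₁ ∈ (G₁ : Set G) ∪ (G₂ : Set G) := hu.1 u₁ (by simp)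
            have hv1 : v₁ ∈ (G₁ : Set G) ∪ (G₂ : Set G) := hv.1 v₁ (by simp)
            have hp' : u₁ * (u₂ :: u'').prod = v₁ * (p :: q).prod := by
              simpa only [List.prod_cons] using hp
            by_cases hj : SameF G₁ G₂ u₁ v₁
            · set e := u₁⁻¹ * v₁ with he
              have hrel : (u₂ :: u'').prod = e * (p :: q).prod := by
                rw [he, mul_assoc, ← hp']
                group
              have hue : SameF G₁ G₂ u₁ e := by
                rcases hj with ⟨h1, h2⟩ | ⟨h1, h2⟩
                · exact Or.inl ⟨h1, mul_mem (inv_mem h1) h2⟩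
                · exact Or.inr ⟨h1, mul_mem (inv_mem h1) h2⟩
              have hve : SameF G₁ G₂ v₁ e := by
                rcases hj with ⟨h1, h2⟩ | ⟨h1, h2⟩
                · exact Or.inl ⟨h2, mul_mem (inv_mem h1) h2⟩
                · exact Or.inr ⟨h2, mul_mem (inv_mem h1) h2⟩
              have heUn : e ∈ (G₁ : Set G) ∪ (G₂ : Set G) := by
                rcases hue with ⟨h1, h2⟩ | ⟨h1, h2⟩
                · exact Or.inl h2
                · exact Or.inr h2
              by_cases heH : e ∈ H
              · -- absorb e into the second word
                have hpUn : p ∈ (G₁ : Set G) ∪ (G₂ : Set G) := hv.1 p (by simp)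
                have hepH : (e * p) ∉ H := by
                  intro hc
                  exact hvnotH p (by simp) (by simpa using mul_mem (inv_mem heH) hc)
                have hv''red : ReducedWord' G₁ G₂ H ((e * p) :: q) := by
                  apply reduced_of_strong
                  · intro x hx
                    rcases List.mem_cons.mp hx with rfl | hx
                    · exact mul_mem_union_of_sameF ham (sameF_of_mem_H_left ham heH hpUn)
                    · exact hv.1 x (by simp [hx])
                  · exact chain_replace_head ham (List.isChain_cons_cons.mp hv.2.1).2 hepH
                      (sameF_H_mul ham heH hpUn)
                  · intro x hx
                    rcases List.mem_cons.mp hx with rfl | hx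
                    · exact hepH
                    · exact hvnotH x (by simp [hx])
                have hq : (u₂ :: u'').prod = ((e * p) :: q).prod := by
                  rw [hrel, List.prod_cons, List.prod_cons]
                  group
                have hlen2 : (u₂ :: u'').length + ((e * p) :: q).length ≤ N := by
                  simp only [List.length_cons] at hlen ⊢
                  omega
                have := IH _ _ hlen2 (reduced_tail hu) hv''red hq
                simp only [List.length_cons] at this ⊢
                omega
              · -- e ∉ H : contradiction
                exfalso
                have hiu : ReducedWord' G₁ G₂ H (invrev (u₂ :: u'')) :=
                  invrev_reduced ham (reduced_tail hu)
                have hWred : ReducedWord' G₁ G₂ H (invrev (u₂ :: u'') ++ e :: p :: q) := by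
                  apply reduced_append ham hiu.1
                  · intro x hx
                    rcases List.mem_cons.mp hx with rfl | hx
                    · exact heUn
                    · exact hv.1 x (by simp [hx])
                  · exact hiu.2.1
                  · apply chain_replace_head ham ?_ heH ?_
                    · exact v₁
                    · exact hv.2.1
                    · exact hve
                  · exact invrev_notH (fun x hx => hunotH x (by simp [hx]))
                  · intro x hx
                    rcases List.mem_cons.mp hx with rfl | hx
                    · exact heH
                    · exact hvnotH x (by simp [hx])
                  · intro x hx y hy
                    rw [invrev_getLast?] at hx
                    simp at hx hy
                    subst hy
                    rw [← hx, idf_iff, sameF_inv_iff]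
                    intro hc
                    exact idf_iff.mp (idf_of_sameF ham heH hue
                      (idf_symm (List.isChain_cons_cons.mp hu.2.1).1)) hc
                refine ham.2.2 _ hWred (by simp) ?_
                rw [List.prod_append, invrev_prod, hrel]
                simp only [List.prod_cons]
                group
            · -- different factors: direct contradiction
              exfalso
              have hiu : ReducedWord' G₁ G₂ H (invrev (u₁ :: u₂ :: u'')) :=
                invrev_reduced ham hu
              have hWred : ReducedWord' G₁ G₂ H
                  (invrev (u₁ :: u₂ :: u'') ++ v₁ :: p :: q) := by
                apply reduced_append ham hiu.1 hv.1 hiu.2.1 hv.2.1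
                  (invrev_notH hunotH) hvnotH
                intro x hx y hy
                rw [invrev_getLast?] at hx
                simp at hx hy
                subst hy
                rw [← hx, idf_iff, sameF_inv_iff]
                exact hj
              refine ham.2.2 _ hWred (by simp) ?_
              rw [List.prod_append, invrev_prod, hp]
              group

end Unique

section Conj

variable {G : Type*} [Group G] {G₁ G₂ H : Subgroup G}

lemma pow_word_reduced (ham : IsAmalgam G₁ G₂ H) {x : List G} (hx : ReducedWord' G₁ G₂ H x)
    (h2 : 2 ≤ x.length)
    (hcyc : ∀ p ∈ x.getLast?, ∀ q ∈ x.head?, InDiffFactors G₁ G₂ p q) (n : ℕ) :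
    ∃ y, ReducedWord' G₁ G₂ H y ∧ y.prod = x.prod ^ (n + 1) ∧
      y.length = (n + 1) * x.length ∧ y.head? = x.head? := by
  have hxnotH := hx.2.2.1 (by omega)
  have hxne : x ≠ [] := by intro h; rw [h] at h2; simp at h2
  induction n with
  | zero => exact ⟨x, hx, by simp, by simp, rfl⟩
  | succ n IH =>
    obtain ⟨y, hy, hyp, hyl, hyh⟩ := IH
    have hyge : 2 ≤ y.length := by
      rw [hyl]
      exact le_trans h2 (Nat.le_mul_of_pos_left _ (Nat.succ_pos n))
    refine ⟨x ++ y, ?_, ?_, ?_, ?_⟩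
    · apply reduced_append ham hx.1 hy.1 hx.2.1 hy.2.1 hxnotH (hy.2.2.1 (by omega))
      intro p hp q hq
      rw [hyh] at hq
      exact hcyc p hp q hq
    · rw [List.prod_append, hyp, ← pow_succ']
    · rw [List.length_append, hyl]
      ring
    · rw [List.head?_append_of_ne_nil _ hxne]
  
lemma not_conj_factor (ham : IsAmalgam G₁ G₂ H) {x : List G} (hx : ReducedWord' G₁ G₂ H x)
    (h2 : 2 ≤ x.length)
    (hcyc : ∀ p ∈ x.getLast?, ∀ q ∈ x.head?, InDiffFactors G₁ G₂ p q)
    {g k : G} (hk : k ∈ (G₁ : Set G) ∪ (G₂ : Set G)) (hconj : g * x.prod * g⁻¹ = k) :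
    False := by
  obtain ⟨u, hu, hup⟩ := exists_reduced ham g
  set n := u.length + 1 with hn
  have hkn : k ^ (n + 1) ∈ (G₁ : Set G) ∪ (G₂ : Set G) := by
    rcases hk with h | h
    · exact Or.inl (pow_mem h (n+1))
    · exact Or.inr (pow_mem h (n+1))
  have hconjpow : x.prod ^ (n+1) = g⁻¹ * k ^ (n+1) * g := by
    have hx' : x.prod = g⁻¹ * k * g := by rw [← hconj]; group
    rw [hx']
    clear hx' hconj
    induction (n+1) with
    | zero => simp
    | succ m IHm => rw [pow_succ, pow_succ, IHm]; group
  -- reduced word for the right side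
  have hvlet : ∀ s ∈ invrev u ++ [k ^ (n+1)], s ∈ (G₁ : Set G) ∪ (G₂ : Set G) := by
    intro s hs
    rcases List.mem_append.mp hs with hs | hs
    · exact (invrev_reduced ham hu).1 s hs
    · simp at hs
      subst hs
      exact hkn
  obtain ⟨W, hW, hWp, hWl⟩ := mul_word ham hu hvlet
  obtain ⟨y, hy, hyp, hyl, _⟩ := pow_word_reduced ham hx h2 hcyc n
  have hprod_eq : y.prod = W.prod := by
    rw [hyp, hWp, List.prod_append, invrev_prod, hup, hconjpow]
    simp
  have hlen_eq := length_unique ham hy hW hprod_eq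
  rw [hyl] at hlen_eq
  have h1 : (n+1) * 2 ≤ (n+1) * x.length := Nat.mul_le_mul_left _ h2
  have h2' : W.length ≤ (invrev u ++ [k ^ (n+1)]).length + u.length := hWl
  simp [invrev_length] at h2'
  omega

end Conj

section Sym

variable {G : Type*} [Group G] {G₁ G₂ H : Subgroup G}

lemma sym_pairs (ham : IsAmalgam G₁ G₂ H) :
    ∀ N (x : List G), x.length ≤ N → ReducedWord' G₁ G₂ H x →
    (∃ g k : G, k ∈ (G₁ : Set G) ∪ (G₂ : Set G) ∧ g * x.prod * g⁻¹ = k) →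
    (x.length % 2 = 1 ∨ x = []) ∧
    ∀ i j (hi : i < x.length) (hj : j < x.length), i + j + 1 = x.length → i < j →
      ∃ h₁ ∈ H, ∃ h₂ ∈ H, x[j] = h₁ * (x[i])⁻¹ * h₂ := by
  intro N
  induction N with
  | zero =>
    intro x hlen _ _
    have : x = [] := List.length_eq_zero_iff.mp (by omega)
    subst this
    exact ⟨Or.inr rfl, by intro i j hi; simp at hi⟩
  | succ N IH =>
    intro x hlen hx hconj
    cases hx0 : x with
    | nil => exact ⟨Or.inr rfl, by intro i j hi; simp at hi⟩
    | cons x₀ t =>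
      subst hx0
      cases ht : t with
      | nil =>
        exact ⟨Or.inl (by simp), by intro i j hi hj hsum hij; simp at hi hj; omega⟩
      | cons x₁ r =>
        subst ht
        obtain ⟨g, k, hk, hconj⟩ := hconj
        rcases List.eq_nil_or_concat r with hr | ⟨r', z, rfl⟩
        · -- x = [x₀, x₁] : impossible
          subst hr
          exfalso
          apply not_conj_factor ham hx (by simp) ?_ hk hconj
          intro p hp q hq
          simp at hp hq
          subst hp; subst hq
          exact idf_symm (List.isChain_cons_cons.mp hx.2.1).1
        · -- x = x₀ :: x₁ :: r' ++ [z]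
          simp only [List.concat_eq_append] at hlen hx hconj ⊢
          have hxlen : x₀ :: x₁ :: (r' ++ [z]) = (x₀ :: x₁ :: r') ++ [z] := by simp
          have hnotH : ∀ w ∈ x₀ :: x₁ :: (r' ++ [z]), w ∉ H := hx.2.2.1 (by simp)
          have hlet := hx.1
          have hzUn : z ∈ (G₁ : Set G) ∪ (G₂ : Set G) := hlet z (by simp)
          have hx0Un : x₀ ∈ (G₁ : Set G) ∪ (G₂ : Set G) := hlet x₀ (by simp)
          have hx1Un : x₁ ∈ (G₁ : Set G) ∪ (G₂ : Set G) := hlet x₁ (by simp)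
          have hzH : z ∉ H := hnotH z (by simp)
          have hx0H : x₀ ∉ H := hnotH x₀ (by simp)
          have hx1H : x₁ ∉ H := hnotH x₁ (by simp)
          have hchain := hx.2.1
          have hchain' : ((x₀ :: x₁ :: r') ++ [z]).Chain' (InDiffFactors G₁ G₂) := by
            rw [← hxlen]; exact hchain
          have hjunc := List.isChain_append.mp hchain'
          have hxprod : (x₀ :: x₁ :: (r' ++ [z])).prod = x₀ * x₁ * r'.prod * z := by
            simp [List.prod_cons, List.prod_append, mul_assoc]
          -- Step 1 : z and x₀ in a common factor
          have hsf0 : SameF G₁ G₂ z x₀ := by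
            by_contra hne
            apply not_conj_factor ham hx (by simp) ?_ hk hconj
            intro p hp q hq
            rw [hxlen, List.getLast?_concat] at hp
            simp at hp hq
            subst hp; subst hq
            exact idf_iff.mpr hne
          set h := z * x₀ with hh
          have hsfzh : SameF G₁ G₂ z h := by
            rcases hsf0 with ⟨h1, h2⟩ | ⟨h1, h2⟩
            · exact Or.inl ⟨h1, mul_mem h1 h2⟩
            · exact Or.inr ⟨h1, mul_mem h1 h2⟩
          have hsfx0h : SameF G₁ G₂ x₀ h := by
            rcases hsf0 with ⟨h1, h2⟩ | ⟨h1, h2⟩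
            · exact Or.inl ⟨h2, mul_mem h1 h2⟩
            · exact Or.inr ⟨h2, mul_mem h1 h2⟩
          have hhUn : h ∈ (G₁ : Set G) ∪ (G₂ : Set G) := mul_mem_union_of_sameF ham hsf0
          -- Step 2 : h = z * x₀ ∈ H
          have hH : h ∈ H := by
            by_contra hhH
            set y := h :: x₁ :: r' with hy
            have hychain : y.Chain' (InDiffFactors G₁ G₂) :=
              chain_replace_head ham hjunc.1 hhH hsfx0h
            have hyred : ReducedWord' G₁ G₂ H y := by
              apply reduced_of_strong
              · intro w hw
                rcases List.mem_cons.mp hw with rfl | hw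
                · exact hhUn
                · exact hlet w (by simp at hw ⊢; tauto)
              · exact hychain
              · intro w hw
                rcases List.mem_cons.mp hw with rfl | hw
                · exact hhH
                · exact hnotH w (by simp at hw ⊢; tauto)
            have hyprod : y.prod = z * (x₀ :: x₁ :: (r' ++ [z])).prod * z⁻¹ := by
              rw [hxprod, hy]
              simp only [List.prod_cons]
              rw [hh]
              group
            apply not_conj_factor ham hyred (by simp [hy]) ?_ hk
              (g := g * z⁻¹) ?_
            · intro p hp q hq
              simp only [hy] at hp hq
              simp at hq
              subst hq
              rw [List.getLast?_cons_cons] at hp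
              have hidfpz : InDiffFactors G₁ G₂ p z := by
                apply hjunc.2.2 p ?_ z (by simp)
                rw [List.getLast?_cons_cons]
                exact hp
              exact idf_of_sameF ham hhH hsfzh hidfpz
            · rw [hyprod, ← hconj]
              group
          -- Step 3 : recurse on x' = (h * x₁) :: r'
          set x' := (h * x₁) :: r' with hx'
          have hhx1H : h * x₁ ∉ H := by
            intro hc
            exact hx1H (by simpa using mul_mem (inv_mem hH) hc)
          have hx'red : ReducedWord' G₁ G₂ H x' := by
            apply reduced_of_strong
            · intro w hw
              rcases List.mem_cons.mp hw with rfl | hw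
              · exact mul_mem_union_of_sameF ham (sameF_of_mem_H_left ham hH hx1Un)
              · exact hlet w (by simp at hw ⊢; tauto)
            · exact chain_replace_head ham (List.isChain_cons_cons.mp hjunc.1).2 hhx1H
                (sameF_H_mul ham hH hx1Un)
            · intro w hw
              rcases List.mem_cons.mp hw with rfl | hw
              · exact hhx1H
              · exact hnotH w (by simp at hw ⊢; tauto)
          have hx'prod : x'.prod = z * (x₀ :: x₁ :: (r' ++ [z])).prod * z⁻¹ := by
            rw [hxprod, hx']
            simp only [List.prod_cons]
            rw [hh]
            group
          have hx'conj : ∃ g' k' : G, k' ∈ (G₁ : Set G) ∪ (G₂ : Set G) ∧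
              g' * x'.prod * g'⁻¹ = k' := by
            refine ⟨g * z⁻¹, k, hk, ?_⟩
            rw [hx'prod, ← hconj]
            group
          have hx'len : x'.length = r'.length + 1 := by simp [hx']
          have hxlen' : (x₀ :: x₁ :: (r' ++ [z])).length = r'.length + 3 := by simp
          have hlenN : x'.length ≤ N := by
            rw [hx'len]
            simp only [List.length_cons, List.length_append, List.length_singleton] at hlen
            omega
          obtain ⟨hpar', hpairs'⟩ := IH x' hlenN hx'red hx'conj
          have hpar : (x₀ :: x₁ :: (r' ++ [z])).length % 2 = 1 := by
            rcases hpar' with hp1 | hp0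
            · rw [hx'len] at hp1
              rw [hxlen']
              omega
            · exact absurd hp0 (by simp [hx'])
          refine ⟨Or.inl hpar, ?_⟩
          intro i j hi hj hsum hij
          rw [hxlen'] at hsum
          have hgetz : (x₀ :: x₁ :: (r' ++ [z]))[r'.length + 2]'(by simp) = z := by
            simp [List.getElem_cons_succ]
          rcases Nat.eq_zero_or_pos i with rfl | hipos
          · -- i = 0, j = length - 1
            have hj' : j = r'.length + 2 := by omega
            subst hj'
            refine ⟨h, hH, 1, one_mem H, ?_⟩
            rw [hgetz]
            simp [hh]
          · -- i ≥ 1 : use the pair (i-1, j-1) of x'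
            have hij2 : i + 2 ≤ j := by
              by_contra hc
              have : j = i + 1 := by omega
              omega
            obtain ⟨i', rfl⟩ : ∃ i', i = i' + 1 := ⟨i - 1, by omega⟩
            obtain ⟨j'', rfl⟩ : ∃ j'', j = j'' + 1 + 1 := ⟨j - 2, by omega⟩
            have hi'x : i' < x'.length := by rw [hx'len]; omega
            have hj'x : j'' + 1 < x'.length := by rw [hx'len]; omega
            obtain ⟨h₁, hh₁, h₂, hh₂, hrel⟩ := hpairs' i' (j'' + 1) hi'x hj'x
              (by rw [hx'len]; omega) (by omega)
            have hA : (x₀ :: x₁ :: (r' ++ [z]))[j'' + 1 + 1]'hj = x'[j'' + 1]'hj'x := by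
              simp only [hx', List.getElem_cons_succ]
              exact List.getElem_append_left (by omega)
            rcases Nat.eq_zero_or_pos i' with rfl | hi'pos
            · -- i = 1
              have hx'0 : x'[0]'hi'x = h * ((x₀ :: x₁ :: (r' ++ [z]))[0 + 1]'hi) := by
                simp [hx']
              refine ⟨h₁, hh₁, h⁻¹ * h₂, mul_mem (inv_mem hH) hh₂, ?_⟩
              rw [hA, hrel, hx'0]
              group
            · obtain ⟨i'', rfl⟩ : ∃ i'', i' = i'' + 1 := ⟨i' - 1, by omega⟩
              have hB : (x₀ :: x₁ :: (r' ++ [z]))[i'' + 1 + 1]'hi = x'[i'' + 1]'hi'x := by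
                simp only [hx', List.getElem_cons_succ]
                exact List.getElem_append_left (by omega)
              refine ⟨h₁, hh₁, h₂, hh₂, ?_⟩
              rw [hA, hrel, hB]

end Sym

section Comb

/-- An abstract `a`-segment in a set of positions. -/
def Seg (A : Set ℕ) (k j : ℕ) : Prop :=
  1 ≤ k ∧ j ∈ A ∧ j + 2 * k ∈ A ∧ ∀ i, 0 < i → i < 2 * k → j + i ∉ A

lemma seg_k_unique_left {A : Set ℕ} {c k k' : ℕ} (h : Seg A k c) (h' : Seg A k' c) :
    k = k' := by
  rcases Nat.lt_trichotomy k k' with h1 | h1 | h1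
  · exact absurd h.2.2.1 (h'.2.2.2 (2 * k) (by have := h.1; omega) (by omega))
  · exact h1
  · exact absurd h'.2.2.1 (h.2.2.2 (2 * k') (by have := h'.1; omega) (by omega))

lemma seg_k_unique_right {A : Set ℕ} {c k k' j j' : ℕ} (h : Seg A k j) (hj : j + 2 * k = c)
    (h' : Seg A k' j') (hj' : j' + 2 * k' = c) : k = k' := by
  have hk1 := h.1
  have hk1' := h'.1
  rcases Nat.lt_trichotomy k k' with h1 | h1 | h1
  · have hmem := h.2.1
    have := h'.2.2.2 (j - j') (by omega) (by omega)
    rw [show j' + (j - j') = j by omega] at this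
    exact absurd hmem this
  · exact h1
  · have hmem := h'.2.1
    have := h.2.2.2 (j' - j) (by omega) (by omega)
    rw [show j + (j' - j) = j' by omega] at this
    exact absurd hmem this

lemma seg_k_unique_cross {A : Set ℕ} {m k k' j j' : ℕ} (h : Seg A k j)
    (hm1 : j < m) (hm2 : m < j + 2 * k) (h' : Seg A k' j')
    (hm1' : j' < m) (hm2' : m < j' + 2 * k') : k = k' := by
  have hk1 := h.1
  have hk1' := h'.1
  have hjj : j = j' := by
    rcases Nat.lt_trichotomy j j' with h1 | h1 | h1
    · have := h.2.2.2 (j' - j) (by omega) (by omega)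
      rw [show j + (j' - j) = j' by omega] at this
      exact absurd h'.2.1 this
    · exact h1
    · have := h'.2.2.2 (j - j') (by omega) (by omega)
      rw [show j' + (j - j') = j by omega] at this
      exact absurd h.2.1 this
  subst hjj
  rcases Nat.lt_trichotomy k k' with h1 | h1 | h1
  · exact absurd h.2.2.1 (h'.2.2.2 (2 * k) (by omega) (by omega))
  · exact h1
  · exact absurd h'.2.2.1 (h.2.2.2 (2 * k') (by omega) (by omega))

lemma comb_core {A B : Set ℕ} {M c : ℕ} (hM : M = 2 * c)
    (hAM : ∀ j ∈ A, j ≤ M) (hBM : ∀ j ∈ B, j ≤ M)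
    (hrel : ∀ j, j ≤ M → j ≠ c → (j ∈ A ↔ M - j ∈ B)) (hcB : c ∉ B) :
    ∃ S : Finset ℕ, S.card ≤ 3 ∧ ∀ k ∉ S,
      Set.ncard {j | Seg A k j} = Set.ncard {j | Seg B k j} := by
  classical
  have hArel : ∀ j, j ∈ A → j ≠ c → M - j ∈ B := fun j hj hne => (hrel j (hAM j hj) hne).mp hj
  have hBrel : ∀ j, j ∈ B → M - j ∈ A := by
    intro j hj
    have hjM : j ≤ M := hBM j hj
    have hjc : j ≠ c := fun h => hcB (h ▸ hj)
    have h1 : M - j ≠ c := by omega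
    have := (hrel (M - j) (by omega) h1).mpr (by rw [show M - (M - j) = j by omega]; exact hj)
    exact this
  set s₁ := if h : (∃ k, Seg A k c) then h.choose else 0 with hs₁
  set s₂ := if h : (∃ k j, Seg A k j ∧ j + 2 * k = c) then h.choose else 0 with hs₂
  set s₃ := if h : (∃ k j, Seg B k j ∧ j < c ∧ c < j + 2 * k) then h.choose else 0 with hs₃
  refine ⟨{s₁, s₂, s₃}, ?_, ?_⟩
  · refine le_trans (Finset.card_insert_le _ _) ?_
    have := Finset.card_insert_le s₂ ({s₃} : Finset ℕ)
    simp at this ⊢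
    omega
  · intro k hk
    simp only [Finset.mem_insert, Finset.mem_singleton, not_or] at hk
    obtain ⟨hk1, hk2, hk3⟩ := hk
    rcases Nat.eq_zero_or_pos k with rfl | hkpos
    · have hA0 : {j | Seg A 0 j} = ∅ := by
        ext j; simp [Seg]
      have hB0 : {j | Seg B 0 j} = ∅ := by
        ext j; simp [Seg]
      rw [hA0, hB0]
    -- main case
    have hseg_between_A : ∀ j, Seg A k j → ∀ p, j < p → p < j + 2 * k → p ∉ A := by
      intro j hA p h1 h2 hp
      have := hA.2.2.2 (p - j) (by omega) (by omega)
      rw [show j + (p - j) = p by omega] at this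
      exact this hp
    have hseg_between_B : ∀ j, Seg B k j → ∀ p, j < p → p < j + 2 * k → p ∉ B := by
      intro j hB p h1 h2 hp
      have := hB.2.2.2 (p - j) (by omega) (by omega)
      rw [show j + (p - j) = p by omega] at this
      exact this hp
    have himg : {j | Seg A k j} = (fun j => M - (j + 2 * k)) '' {j | Seg B k j} := by
      ext j
      simp only [Set.mem_setOf_eq, Set.mem_image]
      constructor
      · intro hA
        have hjc : j ≠ c := by
          intro hceq
          have hp : ∃ k', Seg A k' c := ⟨k, hceq ▸ hA⟩
          apply hk1
          rw [hs₁, dif_pos hp]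
          exact seg_k_unique_left (hceq ▸ hA) hp.choose_spec
        have hj2c : j + 2 * k ≠ c := by
          intro hc
          have hp : ∃ k j, Seg A k j ∧ j + 2 * k = c := ⟨k, j, hA, hc⟩
          apply hk2
          rw [hs₂, dif_pos hp]
          obtain ⟨j', hseg', hj'c⟩ := hp.choose_spec
          exact seg_k_unique_right (h := hA) (hj := hc) (h' := hseg') (hj' := hj'c)
        have hjM : j ≤ M := hAM j hA.2.1
        have hj2M : j + 2 * k ≤ M := hAM _ hA.2.2.1
        have hb1 : M - (j + 2 * k) ∈ B := hArel _ hA.2.2.1 hj2c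
        have hb2 : M - j ∈ B := hArel _ hA.2.1 hjc
        refine ⟨M - (j + 2 * k), ⟨hA.1, hb1, ?_, ?_⟩, by omega⟩
        · rw [show M - (j + 2 * k) + 2 * k = M - j by omega]
          exact hb2
        · intro i hi0 hi2 hmem
          have hle : M - (j + 2 * k) + i ≤ M := by omega
          have hinA : M - (M - (j + 2 * k) + i) ∈ A := hBrel _ hmem
          rw [show M - (M - (j + 2 * k) + i) = j + (2 * k - i) by omega] at hinA
          exact hA.2.2.2 (2 * k - i) (by omega) (by omega) hinA
      · rintro ⟨j', hB, rfl⟩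
        have hj'c : j' ≠ c := fun h => hcB (h ▸ hB.2.1)
        have hj'2c : j' + 2 * k ≠ c := fun h => hcB (h ▸ hB.2.2.1)
        have hj'M : j' ≤ M := hBM _ hB.2.1
        have hj'2M : j' + 2 * k ≤ M := hBM _ hB.2.2.1
        have ha1 : M - (j' + 2 * k) ∈ A := hBrel _ hB.2.2.1
        have ha2 : M - j' ∈ A := hBrel _ hB.2.1
        refine ⟨hB.1, ha1, ?_, ?_⟩
        · rw [show M - (j' + 2 * k) + 2 * k = M - j' by omega]
          exact ha2
        · intro i hi0 hi2 hmem
          set p := M - (j' + 2 * k) + i with hp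
          have hpM : p ≤ M := by omega
          by_cases hpc : p = c
          · -- the B-segment crosses the mirror of c
            have hcross1 : j' < c := by omega
            have hcross2 : c < j' + 2 * k := by omega
            have hp3 : ∃ k j, Seg B k j ∧ j < c ∧ c < j + 2 * k := ⟨k, j', hB, hcross1, hcross2⟩
            apply hk3
            rw [hs₃, dif_pos hp3]
            obtain ⟨j'', hseg'', hc1, hc2⟩ := hp3.choose_spec
            exact seg_k_unique_cross (h := hB) (hm1 := hcross1) (hm2 := hcross2) (h' := hseg'') (hm1' := hc1) (hm2' := hc2)
          · have hinB : M - p ∈ B := (hrel p hpM hpc).mp hmem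
            rw [show M - p = j' + (2 * k - i) by omega] at hinB
            exact hB.2.2.2 (2 * k - i) (by omega) (by omega) hinB
    rw [himg]
    apply Set.ncard_image_of_injOn
    intro a ha b hb hab
    simp only [Set.mem_setOf_eq] at ha hb
    have haM : a + 2 * k ≤ M := hBM _ ha.2.2.1
    have hbM : b + 2 * k ≤ M := hBM _ hb.2.2.1
    simp only at hab
    omega

end Comb

/-- The double coset `H a H`. -/
def DCoset {G : Type*} [Group G] (H : Subgroup G) (a : G) : Set G :=
  (H : Set G) * {a} * (H : Set G)

/-- There is an `a`-segment of length `2k-1` starting at position `j` of the word `w`: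
a subword `a x₁ ⋯ x_{2k-1} a` with no `x_i = a`. -/
def IsSegAt {G : Type*} [Group G] (a : G) (w : List G) (k j : ℕ) : Prop :=
  1 ≤ k ∧ w[j]? = some a ∧ w[j + 2 * k]? = some a ∧
    ∀ i, 0 < i → i < 2 * k → w[j + i]? ≠ some a

/-- `pk a w k` = number of `a`-segments of length `2k-1` in `w`. -/
noncomputable def pk {G : Type*} [Group G] (a : G) (w : List G) (k : ℕ) : ℕ :=
  Set.ncard {j : ℕ | IsSegAt a w k j}

/-- `mk' a w k` = number of `a⁻¹`-segments of length `2k-1` in `w`. -/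
noncomputable def mk' {G : Type*} [Group G] (a : G) (w : List G) (k : ℕ) : ℕ :=
  pk a⁻¹ w k

noncomputable def dk {G : Type*} [Group G] (a : G) (w : List G) (k : ℕ) : ℤ :=
  (pk a w k : ℤ) - (mk' a w k : ℤ)

/-- `rk` is the parity of `dk`. -/
noncomputable def rk {G : Type*} [Group G] (a : G) (w : List G) (k : ℕ) : ℕ :=
  (dk a w k).natAbs % 2

/-- The segment-counting function `f(w) = Σ_k r_k(w)` (all segments have length
at most the length of `w`, so the sum below is the full sum). -/
noncomputable def segf {G : Type*} [Group G] (a : G) (w : List G) : ℕ :=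
  ∑ k ∈ Finset.Icc 1 w.length, rk a w k

/-- Data describing the passage from a reduced word `x` to a special form: each
syllable of the form `u * a^θ * v` with `u v ∈ H` (marked `rep i = true`) is replaced
by `a^θ`, with `u`, `v` absorbed into the neighbouring syllables. -/
structure SpecialData {G : Type*} [Group G] (H : Subgroup G) (a : G) (x : List G) where
  rep : ℕ → Bool
  u : ℕ → G
  v : ℕ → G
  θ : ℕ → ℤ
  hu : ∀ i, u i ∈ H
  hv : ∀ i, v i ∈ H
  hθ : ∀ i, θ i = 1 ∨ θ i = -1
  hrep : ∀ (i : ℕ) (hi : i < x.length), rep i = true → x.get ⟨i, hi⟩ = u i * a ^ θ i * v i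
  hnotrep : ∀ i, rep i = false → u i = 1 ∧ v i = 1
  hforced : ∀ (i : ℕ) (hi : i < x.length),
    (∃ u' ∈ H, ∃ v' ∈ H, ∃ θ' : ℤ, (θ' = 1 ∨ θ' = -1) ∧ x.get ⟨i, hi⟩ = u' * a ^ θ' * v') →
    rep i = true

/-- The special form produced from the reduced word `x` by the data `d`. -/
def SpecialData.word {G : Type*} [Group G] {H : Subgroup G} {a : G} {x : List G}
    (d : SpecialData H a x) : List G :=
  (if x.length ≠ 0 ∧ d.rep 0 = true then [d.u 0] else []) ++
  (List.ofFn fun i : Fin x.length =>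
    if d.rep (i : ℕ) = true then a ^ d.θ (i : ℕ)
    else (if (i : ℕ) = 0 then 1 else d.v ((i : ℕ) - 1)) * x.get i *
      (if (i : ℕ) + 1 < x.length then d.u ((i : ℕ) + 1) else 1)) ++
  (if x.length ≠ 0 ∧ d.rep (x.length - 1) = true then [d.v (x.length - 1)] else [])

/-- `w` is a special form of `g`. -/
def IsSpecialForm {G : Type*} [Group G] (G₁ G₂ H : Subgroup G) (a g : G) (w : List G) : Prop :=
  ∃ (x : List G) (d : SpecialData H a x),
    ReducedWord' G₁ G₂ H x ∧ x.prod = g ∧ w = d.word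

section DCosetLemmas

variable {G : Type*} [Group G] {H : Subgroup G} {a : G}

lemma mem_dcoset_iff {t b : G} :
    t ∈ DCoset H b ↔ ∃ h₁ ∈ H, ∃ h₂ ∈ H, t = h₁ * b * h₂ := by
  unfold DCoset
  constructor
  · rintro ⟨y, ⟨p, hp, q, hq, rfl⟩, h₂, hh₂, rfl⟩
    simp only [Set.mem_singleton_iff] at hq
    subst hq
    exact ⟨p, hp, h₂, hh₂, rfl⟩
  · rintro ⟨h₁, hh₁, h₂, hh₂, rfl⟩
    exact ⟨h₁ * b, ⟨h₁, hh₁, b, rfl, rfl⟩, h₂, hh₂, rfl⟩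

lemma self_mem_dcoset (b : G) : b ∈ DCoset H b :=
  mem_dcoset_iff.mpr ⟨1, one_mem _, 1, one_mem _, by group⟩

lemma dcoset_H_mul {t b h₁ h₂ : G} (hh₁ : h₁ ∈ H) (hh₂ : h₂ ∈ H)
    (h : t ∈ DCoset H b) : h₁ * t * h₂ ∈ DCoset H b := by
  obtain ⟨p, hp, q, hq, rfl⟩ := mem_dcoset_iff.mp h
  exact mem_dcoset_iff.mpr ⟨h₁ * p, mul_mem hh₁ hp, q * h₂, mul_mem hq hh₂, by group⟩

lemma inv_mem_dcoset {t b : G} (h : t ∈ DCoset H b) : t⁻¹ ∈ DCoset H b⁻¹ := by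
  obtain ⟨p, hp, q, hq, rfl⟩ := mem_dcoset_iff.mp h
  exact mem_dcoset_iff.mpr ⟨q⁻¹, inv_mem hq, p⁻¹, inv_mem hp, by group⟩

lemma dcoset_disjoint (hd : DCoset H a ≠ DCoset H a⁻¹) {t : G}
    (h1 : t ∈ DCoset H a) (h2 : t ∈ DCoset H a⁻¹) : False := by
  apply hd
  obtain ⟨p, hp, q, hq, ht1⟩ := mem_dcoset_iff.mp h1
  obtain ⟨r, hr, s, hs, ht2⟩ := mem_dcoset_iff.mp h2
  have heq : p * a * q = r * a⁻¹ * s := ht1.symm.trans ht2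
  have key : a = p⁻¹ * (r * a⁻¹ * s) * q⁻¹ := by rw [← heq]; group
  have key' : a⁻¹ = r⁻¹ * (p * a * q) * s⁻¹ := by rw [heq]; group
  ext u
  constructor
  · intro hu
    obtain ⟨p', hp', q', hq', rfl⟩ := mem_dcoset_iff.mp hu
    refine mem_dcoset_iff.mpr ⟨p' * p⁻¹ * r, mul_mem (mul_mem hp' (inv_mem hp)) hr,
      s * q⁻¹ * q', mul_mem (mul_mem hs (inv_mem hq)) hq', ?_⟩
    conv_lhs => rw [key]
    group
  · intro hu
    obtain ⟨p', hp', q', hq', rfl⟩ := mem_dcoset_iff.mp hu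
    refine mem_dcoset_iff.mpr ⟨p' * r⁻¹ * p, mul_mem (mul_mem hp' (inv_mem hr)) hp,
      q * s⁻¹ * q', mul_mem (mul_mem hq (inv_mem hs)) hq', ?_⟩
    conv_lhs => rw [key']
    group

lemma a_notin_H (hd : DCoset H a ≠ DCoset H a⁻¹) : a ∉ H := by
  intro h
  apply dcoset_disjoint hd (self_mem_dcoset a)
  exact mem_dcoset_iff.mpr ⟨a, h, a, h, by group⟩

lemma ainv_notin_H (hd : DCoset H a ≠ DCoset H a⁻¹) : a⁻¹ ∉ H := by
  intro h
  exact a_notin_H hd (by simpa using inv_mem h)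

lemma a_ne_ainv (hd : DCoset H a ≠ DCoset H a⁻¹) : a ≠ a⁻¹ := by
  intro h
  exact hd (by rw [← h])

end DCosetLemmas

section WordPos

variable {G : Type*} [Group G] {H : Subgroup G} {a : G} {x : List G}

/-- Length of the prefix of the special form. -/
def pad (d : SpecialData H a x) : ℕ := if x.length ≠ 0 ∧ d.rep 0 = true then 1 else 0

lemma word_get_core (d : SpecialData H a x) (i : ℕ) (hi : i < x.length) :
    d.word[pad d + i]? = some (if d.rep i = true then a ^ d.θ i
      else (if i = 0 then 1 else d.v (i - 1)) * x.get ⟨i, hi⟩ *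
        (if i + 1 < x.length then d.u (i + 1) else 1)) := by
  unfold SpecialData.word
  set f : Fin x.length → G := fun i : Fin x.length =>
    if d.rep (i : ℕ) = true then a ^ d.θ (i : ℕ)
    else (if (i : ℕ) = 0 then 1 else d.v ((i : ℕ) - 1)) * x.get i *
      (if (i : ℕ) + 1 < x.length then d.u ((i : ℕ) + 1) else 1) with hf
  set A := (if x.length ≠ 0 ∧ d.rep 0 = true then [d.u 0] else []) ++ List.ofFn f with hA
  have hAl : A.length = pad d + x.length := by
    rw [hA]
    unfold pad
    by_cases hP : x.length ≠ 0 ∧ d.rep 0 = true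
    · rw [if_pos hP, if_pos hP]; simp; omega
    · rw [if_neg hP, if_neg hP]; simp
  rw [List.getElem?_append, if_pos (by omega)]
  have hpadA : (if x.length ≠ 0 ∧ d.rep 0 = true then [d.u 0] else []).length = pad d := by
    unfold pad
    by_cases hP : x.length ≠ 0 ∧ d.rep 0 = true
    · rw [if_pos hP, if_pos hP]; rfl
    · rw [if_neg hP, if_neg hP]; rfl
  rw [hA, List.getElem?_append_right (by omega), hpadA, Nat.add_sub_cancel_left,
    List.getElem?_ofFn]
  simp [List.ofFnNthVal, hi, hf]

lemma word_get_out (d : SpecialData H a x) (j : ℕ)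
    (hj : j < pad d ∨ pad d + x.length ≤ j) :
    d.word[j]? = none ∨ ∃ h ∈ H, d.word[j]? = some h := by
  unfold SpecialData.word
  set f : Fin x.length → G := fun i : Fin x.length =>
    if d.rep (i : ℕ) = true then a ^ d.θ (i : ℕ)
    else (if (i : ℕ) = 0 then 1 else d.v ((i : ℕ) - 1)) * x.get i *
      (if (i : ℕ) + 1 < x.length then d.u ((i : ℕ) + 1) else 1) with hf
  set A := (if x.length ≠ 0 ∧ d.rep 0 = true then [d.u 0] else []) ++ List.ofFn f with hA
  have hAl : A.length = pad d + x.length := by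
    rw [hA]
    unfold pad
    by_cases hP : x.length ≠ 0 ∧ d.rep 0 = true
    · rw [if_pos hP, if_pos hP]; simp; omega
    · rw [if_neg hP, if_neg hP]; simp
  rcases hj with hj | hj
  · -- j < pad d, so pad d = 1 and j = 0
    have hP : x.length ≠ 0 ∧ d.rep 0 = true := by
      by_contra hP
      unfold pad at hj
      rw [if_neg hP] at hj
      omega
    have hj0 : j = 0 := by
      unfold pad at hj
      rw [if_pos hP] at hj
      omega
    subst hj0
    right
    refine ⟨d.u 0, d.hu 0, ?_⟩
    rw [List.getElem?_append, if_pos (by rw [hAl]; unfold pad; rw [if_pos hP]; simp [hP])]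
    rw [hA, List.getElem?_append, if_pos (by rw [if_pos hP]; simp)]
    rw [if_pos hP]
    simp
  · rw [List.getElem?_append, if_neg (by omega)]
    by_cases hQ : x.length ≠ 0 ∧ d.rep (x.length - 1) = true
    · rw [if_pos hQ]
      by_cases hje : j = A.length
      · right
        refine ⟨d.v (x.length - 1), d.hv _, ?_⟩
        rw [show j - A.length = 0 by omega]
        simp
      · left
        rw [List.getElem?_eq_none]
        simp
        omega
    · rw [if_neg hQ]
      left
      simp

variable (hd : DCoset H a ≠ DCoset H a⁻¹)
include hd

lemma word_core_val_a (d : SpecialData H a x) (i : ℕ) (hi : i < x.length) :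
    d.word[pad d + i]? = some a ↔ x.get ⟨i, hi⟩ ∈ DCoset H a := by
  rw [word_get_core d i hi]
  simp only [Option.some.injEq]
  by_cases hrep : d.rep i = true
  · rw [if_pos hrep]
    have hx := d.hrep i hi hrep
    rcases d.hθ i with hθ | hθ
    · apply iff_of_true
      · rw [hθ, zpow_one]
      · rw [hx, hθ, zpow_one]
        exact mem_dcoset_iff.mpr ⟨d.u i, d.hu i, d.v i, d.hv i, rfl⟩
    · apply iff_of_false
      · rw [hθ, zpow_neg_one]
        exact fun h => a_ne_ainv hd h.symm
      · intro hmem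
        apply dcoset_disjoint hd hmem
        rw [hx, hθ, zpow_neg_one]
        exact mem_dcoset_iff.mpr ⟨d.u i, d.hu i, d.v i, d.hv i, rfl⟩
  · rw [if_neg hrep]
    have hH₁ : (if i = 0 then 1 else d.v (i - 1)) ∈ H := by
      split
      · exact one_mem H
      · exact d.hv _
    have hH₂ : (if i + 1 < x.length then d.u (i + 1) else 1) ∈ H := by
      split
      · exact d.hu _
      · exact one_mem H
    have hnot : x.get ⟨i, hi⟩ ∉ DCoset H a := by
      intro hmem
      obtain ⟨p, hp, q, hq, heq⟩ := mem_dcoset_iff.mp hmem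
      have := d.hforced i hi ⟨p, hp, q, hq, 1, Or.inl rfl, by rw [zpow_one]; exact heq⟩
      rw [this] at hrep
      exact hrep rfl
    apply iff_of_false
    · intro heq
      apply hnot
      refine mem_dcoset_iff.mpr ⟨(if i = 0 then 1 else d.v (i - 1))⁻¹, inv_mem hH₁,
        (if i + 1 < x.length then d.u (i + 1) else 1)⁻¹, inv_mem hH₂, ?_⟩
      have h3 : x.get ⟨i, hi⟩ = (if i = 0 then 1 else d.v (i - 1))⁻¹ *
          ((if i = 0 then 1 else d.v (i - 1)) * x.get ⟨i, hi⟩ *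
            (if i + 1 < x.length then d.u (i + 1) else 1)) *
          (if i + 1 < x.length then d.u (i + 1) else 1)⁻¹ := by group
      rw [heq] at h3
      exact h3
    · exact hnot

lemma word_core_val_ainv (d : SpecialData H a x) (i : ℕ) (hi : i < x.length) :
    d.word[pad d + i]? = some a⁻¹ ↔ x.get ⟨i, hi⟩ ∈ DCoset H a⁻¹ := by
  rw [word_get_core d i hi]
  simp only [Option.some.injEq]
  by_cases hrep : d.rep i = true
  · rw [if_pos hrep]
    have hx := d.hrep i hi hrep
    rcases d.hθ i with hθ | hθ
    · apply iff_of_false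
      · rw [hθ, zpow_one]
        exact fun h => a_ne_ainv hd h
      · intro hmem
        apply dcoset_disjoint hd ?_ hmem
        rw [hx, hθ, zpow_one]
        exact mem_dcoset_iff.mpr ⟨d.u i, d.hu i, d.v i, d.hv i, rfl⟩
    · apply iff_of_true
      · rw [hθ, zpow_neg_one]
      · rw [hx, hθ, zpow_neg_one]
        exact mem_dcoset_iff.mpr ⟨d.u i, d.hu i, d.v i, d.hv i, rfl⟩
  · rw [if_neg hrep]
    have hH₁ : (if i = 0 then 1 else d.v (i - 1)) ∈ H := by
      split
      · exact one_mem H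
      · exact d.hv _
    have hH₂ : (if i + 1 < x.length then d.u (i + 1) else 1) ∈ H := by
      split
      · exact d.hu _
      · exact one_mem H
    have hnot : x.get ⟨i, hi⟩ ∉ DCoset H a⁻¹ := by
      intro hmem
      obtain ⟨p, hp, q, hq, heq⟩ := mem_dcoset_iff.mp hmem
      have := d.hforced i hi ⟨p, hp, q, hq, -1, Or.inr rfl, by rw [zpow_neg_one]; exact heq⟩
      rw [this] at hrep
      exact hrep rfl
    apply iff_of_false
    · intro heq
      apply hnot
      refine mem_dcoset_iff.mpr ⟨(if i = 0 then 1 else d.v (i - 1))⁻¹, inv_mem hH₁,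
        (if i + 1 < x.length then d.u (i + 1) else 1)⁻¹, inv_mem hH₂, ?_⟩
      have h3 : x.get ⟨i, hi⟩ = (if i = 0 then 1 else d.v (i - 1))⁻¹ *
          ((if i = 0 then 1 else d.v (i - 1)) * x.get ⟨i, hi⟩ *
            (if i + 1 < x.length then d.u (i + 1) else 1)) *
          (if i + 1 < x.length then d.u (i + 1) else 1)⁻¹ := by group
      rw [heq] at h3
      exact h3
    · exact hnot

lemma mem_Aset_iff (d : SpecialData H a x) (j : ℕ) :
    d.word[j]? = some a ↔
      ∃ i, ∃ hi : i < x.length, j = pad d + i ∧ x.get ⟨i, hi⟩ ∈ DCoset H a := by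
  constructor
  · intro hj
    by_cases hrange : pad d ≤ j ∧ j < pad d + x.length
    · obtain ⟨i, hji⟩ : ∃ i, j = pad d + i := ⟨j - pad d, by omega⟩
      have hi : i < x.length := by omega
      exact ⟨i, hi, hji, (word_core_val_a hd d i hi).mp (hji ▸ hj)⟩
    · exfalso
      rcases word_get_out d j (by omega) with h | ⟨h, hH, heq⟩
      · rw [h] at hj; cases hj
      · rw [heq] at hj
        exact a_notin_H hd (Option.some.inj hj ▸ hH)
  · rintro ⟨i, hi, rfl, hmem⟩
    exact (word_core_val_a hd d i hi).mpr hmem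

lemma mem_Bset_iff (d : SpecialData H a x) (j : ℕ) :
    d.word[j]? = some a⁻¹ ↔
      ∃ i, ∃ hi : i < x.length, j = pad d + i ∧ x.get ⟨i, hi⟩ ∈ DCoset H a⁻¹ := by
  constructor
  · intro hj
    by_cases hrange : pad d ≤ j ∧ j < pad d + x.length
    · obtain ⟨i, hji⟩ : ∃ i, j = pad d + i := ⟨j - pad d, by omega⟩
      have hi : i < x.length := by omega
      exact ⟨i, hi, hji, (word_core_val_ainv hd d i hi).mp (hji ▸ hj)⟩
    · exfalso
      rcases word_get_out d j (by omega) with h | ⟨h, hH, heq⟩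
      · rw [h] at hj; cases hj
      · rw [heq] at hj
        exact ainv_notin_H hd (Option.some.inj hj ▸ hH)
  · rintro ⟨i, hi, rfl, hmem⟩
    exact (word_core_val_ainv hd d i hi).mpr hmem

end WordPos

/-- For every conjugate `s` of an element of a factor, `f s ≤ 3`. -/
theorem segf_le_three_on_conjugates {G : Type*} [Group G] (G₁ G₂ H : Subgroup G) (a : G)
    (ham : IsAmalgam G₁ G₂ H) (ha : a ∈ (G₁ : Set G) ∪ (G₂ : Set G))
    (hd : DCoset H a ≠ DCoset H a⁻¹)
    (s : G) (hs : s ∈ {x : G | ∃ g k : G, (k ∈ G₁ ∨ k ∈ G₂) ∧ x = g⁻¹ * k * g})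
    (w : List G) (hw : IsSpecialForm G₁ G₂ H a s w) :
    segf a w ≤ 3 := by
  classical
  obtain ⟨x, d, hxred, hxprod, rfl⟩ := hw
  obtain ⟨g, k, hk, hsval⟩ := hs
  have hkUn : k ∈ (G₁ : Set G) ∪ (G₂ : Set G) := by
    rcases hk with h | h
    · exact Or.inl h
    · exact Or.inr h
  have hsym := sym_pairs ham x.length x le_rfl hxred
    ⟨g, k, hkUn, by rw [hxprod, hsval]; group⟩
  rcases Nat.eq_zero_or_pos x.length with hL0 | hLpos
  · -- empty word
    have hx0 : x = [] := List.length_eq_zero_iff.mp hL0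
    subst hx0
    have hw0 : d.word = [] := by
      unfold SpecialData.word
      simp
    rw [hw0]
    simp [segf]
  · have hLodd : x.length % 2 = 1 := by
      rcases hsym.1 with h | h
      · exact h
      · rw [h] at hLpos; simp at hLpos
    set L := x.length with hLdef
    set m := (L - 1) / 2 with hm
    set ε := pad d with hε
    set M := 2 * ε + (L - 1) with hMdef
    set c := ε + m with hc
    have hM : M = 2 * c := by omega
    set Aset := {j : ℕ | d.word[j]? = some a} with hAset
    set Bset := {j : ℕ | d.word[j]? = some a⁻¹} with hBset
    have hAM : ∀ j ∈ Aset, j ≤ M := by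
      intro j hj
      obtain ⟨i, hi, rfl, _⟩ := (mem_Aset_iff hd d j).mp hj
      omega
    have hBM : ∀ j ∈ Bset, j ≤ M := by
      intro j hj
      obtain ⟨i, hi, rfl, _⟩ := (mem_Bset_iff hd d j).mp hj
      omega
    -- pairing fact from the symmetry of the reduced word
    have hpair : ∀ (b : G) (i : ℕ) (hi : i < L) (hi' : L - 1 - i < L), i ≠ L - 1 - i →
        (x.get ⟨i, hi⟩ ∈ DCoset H b ↔ x.get ⟨L - 1 - i, hi'⟩ ∈ DCoset H b⁻¹) := by
      intro b i hi hi' hne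
      rcases Nat.lt_or_ge i (L - 1 - i) with hlt | hge
      · obtain ⟨h₁, hh₁, h₂, hh₂, heq⟩ := hsym.2 i (L - 1 - i) hi hi' (by omega) hlt
        simp only [List.get_eq_getElem] at *
        constructor
        · intro hmem
          rw [heq]
          exact dcoset_H_mul hh₁ hh₂ (inv_mem_dcoset hmem)
        · intro hmem
          have h3 : (x[i]'hi)⁻¹ = h₁⁻¹ * (x[L - 1 - i]'hi') * h₂⁻¹ := by
            rw [heq]; group
          have h4 : (x[i]'hi)⁻¹ ∈ DCoset H b⁻¹ := by
            rw [h3]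
            exact dcoset_H_mul (inv_mem hh₁) (inv_mem hh₂) hmem
          have := inv_mem_dcoset h4
          simpa using this
      · have hlt2 : L - 1 - i < i := by omega
        obtain ⟨h₁, hh₁, h₂, hh₂, heq⟩ := hsym.2 (L - 1 - i) i hi' hi (by omega) hlt2
        simp only [List.get_eq_getElem] at *
        constructor
        · intro hmem
          have h3 : (x[L - 1 - i]'hi')⁻¹ = h₁⁻¹ * (x[i]'hi) * h₂⁻¹ := by
            rw [heq]; group
          have h4 : (x[L - 1 - i]'hi')⁻¹ ∈ DCoset H b := by
            rw [h3]
            exact dcoset_H_mul (inv_mem hh₁) (inv_mem hh₂) hmem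
          have := inv_mem_dcoset h4
          simpa using this
        · intro hmem
          rw [heq]
          have h5 := inv_mem_dcoset hmem
          rw [inv_inv] at h5
          exact dcoset_H_mul hh₁ hh₂ h5
    have hrel : ∀ j, j ≤ M → j ≠ c → (j ∈ Aset ↔ M - j ∈ Bset) := by
      intro j hjM hjc
      constructor
      · intro hj
        obtain ⟨i, hi, rfl, hmem⟩ := (mem_Aset_iff hd d j).mp hj
        have hne : i ≠ L - 1 - i := by omega
        have hi' : L - 1 - i < L := by omega
        apply (mem_Bset_iff hd d _).mpr
        exact ⟨L - 1 - i, hi', by omega, (hpair a i hi hi' hne).mp hmem⟩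
      · intro hj
        obtain ⟨i', hi', heq', hmem'⟩ := (mem_Bset_iff hd d (M - j)).mp hj
        have hne : i' ≠ L - 1 - i' := by omega
        have hi'' : L - 1 - i' < L := by omega
        have hpp := (hpair a⁻¹ i' hi' hi'' hne).mp hmem'
        rw [inv_inv] at hpp
        apply (mem_Aset_iff hd d j).mpr
        exact ⟨L - 1 - i', hi'', by omega, hpp⟩
    have key : ∃ S : Finset ℕ, S.card ≤ 3 ∧ ∀ k' ∉ S,
        pk a d.word k' = mk' a d.word k' := by
      have hpkA : ∀ k', pk a d.word k' = Set.ncard {j | Seg Aset k' j} := fun _ => rfl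
      have hpkB : ∀ k', mk' a d.word k' = Set.ncard {j | Seg Bset k' j} := fun _ => rfl
      by_cases hcB : c ∈ Bset
      · have hcA : c ∉ Aset := by
          intro hcA
          obtain ⟨i, hi, hceq, hmem⟩ := (mem_Aset_iff hd d c).mp hcA
          obtain ⟨i2, hi2, hceq2, hmem2⟩ := (mem_Bset_iff hd d c).mp hcB
          have : i = i2 := by omega
          subst this
          exact dcoset_disjoint hd hmem hmem2
        have hrel' : ∀ j, j ≤ M → j ≠ c → (j ∈ Bset ↔ M - j ∈ Aset) := by
          intro j hjM hjc
          have h1 : M - j ≤ M := by omega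
          have h2 : M - j ≠ c := by omega
          have h3 := hrel (M - j) h1 h2
          rw [show M - (M - j) = j by omega] at h3
          exact h3.symm
        obtain ⟨S, hScard, hS⟩ := comb_core hM hBM hAM hrel' hcA
        exact ⟨S, hScard, fun k' hk' => by rw [hpkA, hpkB, (hS k' hk').symm]⟩
      · obtain ⟨S, hScard, hS⟩ := comb_core hM hAM hBM hrel hcB
        exact ⟨S, hScard, fun k' hk' => by rw [hpkA, hpkB, hS k' hk']⟩
    obtain ⟨S, hScard, hpm⟩ := key
    have hrk0 : ∀ k' ∉ S, rk a d.word k' = 0 := by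
      intro k' hk'
      unfold rk dk
      rw [hpm k' hk']
      simp
    have hrk1 : ∀ k', rk a d.word k' ≤ 1 := by
      intro k'
      unfold rk
      omega
    calc segf a d.word = ∑ k' ∈ Finset.Icc 1 d.word.length, rk a d.word k' := rfl
      _ ≤ ∑ k' ∈ Finset.Icc 1 d.word.length, (if k' ∈ S then 1 else 0) := by
          apply Finset.sum_le_sum
          intro k' _
          by_cases h : k' ∈ S
          · simp [h, hrk1 k']
          · simp [h, hrk0 k' h]
      _ = ∑ k' ∈ (Finset.Icc 1 d.word.length).filter (· ∈ S), 1 :=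
          (Finset.sum_filter _ _).symm
      _ = ((Finset.Icc 1 d.word.length).filter (· ∈ S)).card := by simp
      _ ≤ S.card := Finset.card_le_card (fun k' hk' => (Finset.mem_filter.mp hk').2)
      _ ≤ 3 := hScard
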